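/- If a subset Y of X can be partitioned into at most n thin subsets, then |Δ_p(Y)| ≤ n for every p ∈ X^#. -/
import Mathlib


open Metric Bornology Set

variable {X : Type*} [MetricSpace X]

/-- `B(A,r) = ⋃_{a∈A} B(a,r)` where `B(a,r)` is the closed ball of radius `r`. -/
def ballU (A : Set X) (r : ℝ) : Set X := ⋃ a ∈ A, Metric.closedBall a r

/-- `X^#`: the set of ultrafilters on `X` all of whose members are unbounded. -/
def sharp (X : Type*) [MetricSpace X] : Set (Ultrafilter X) :=
  {p | ∀ P ∈ p, ¬ Bornology.IsBounded P}

/-- Parallelity: `p ∥ q` iff there is `r ≥ 0` with `B(Q,r) ∈ p` for every `Q ∈ q`. -/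
def Par (p q : Ultrafilter X) : Prop :=
  ∃ r : ℝ, 0 ≤ r ∧ ∀ Q ∈ q, ballU Q r ∈ p

/-- `p̆ = {q ∈ X^# : q ∥ p}`. -/
def pbreve (p : Ultrafilter X) : Set (Ultrafilter X) :=
  {q | q ∈ sharp X ∧ Par q p}

/-- The `p`-companion `Δ_p(Y) = {q ∈ X^# : Y ∈ q, q ∥ p}`. -/
def Delta (p : Ultrafilter X) (Y : Set X) : Set (Ultrafilter X) :=
  {q | q ∈ sharp X ∧ Y ∈ q ∧ Par q p}

/-- A set `S ⊆ X^#` is invariant if `p ∈ S`, `q ∈ X^#`, `q ∥ p` imply `q ∈ S`. -/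
def Invt (S : Set (Ultrafilter X)) : Prop :=
  ∀ p ∈ S, ∀ q, q ∈ sharp X → Par q p → q ∈ S

/-- `Y` is large if `X = B(Y,r)` for some `r ≥ 0`. -/
def Large (Y : Set X) : Prop := ∃ r : ℝ, 0 ≤ r ∧ ballU Y r = Set.univ

/-- `Y` is thick if for every `r ≥ 0` there is `y ∈ Y` with `B(y,r) ⊆ Y`. -/
def Thick (Y : Set X) : Prop := ∀ r : ℝ, 0 ≤ r → ∃ y ∈ Y, Metric.closedBall y r ⊆ Y

/-- `Y` is prethick if `B(Y,r)` is thick for some `r ≥ 0`. -/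
def Prethick (Y : Set X) : Prop := ∃ r : ℝ, 0 ≤ r ∧ Thick (ballU Y r)

/-- `Y` is small if `(X∖Y) ∩ L` is large for every large `L`. -/
def SmallSet (Y : Set X) : Prop := ∀ L : Set X, Large L → Large (Yᶜ ∩ L)

/-- `Y` is thin if for each `r ≥ 0` there is a bounded `V` with
`B(y,r) ∩ Y = {y}` for all `y ∈ Y∖V`. -/
def Thin (Y : Set X) : Prop :=
  ∀ r : ℝ, 0 ≤ r → ∃ V : Set X, Bornology.IsBounded V ∧
    ∀ y ∈ Y \ V, Metric.closedBall y r ∩ Y = {y}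

/-- `Y` is `n`-thin if for each `r ≥ 0` there is a bounded `V` with
`|B(y,r) ∩ Y| ≤ n` for all `y ∈ Y∖V`. -/
def NThin (n : ℕ) (Y : Set X) : Prop :=
  ∀ r : ℝ, 0 ≤ r → ∃ V : Set X, Bornology.IsBounded V ∧
    ∀ y ∈ Y \ V, (Metric.closedBall y r ∩ Y).encard ≤ n

/-- `M` is a minimal nonempty closed invariant subset of `X^#`
(closures/closedness taken in the Stone topology on ultrafilters). -/
def MinCI (M : Set (Ultrafilter X)) : Prop :=
  M ⊆ sharp X ∧ M.Nonempty ∧ IsClosed M ∧ Invt M ∧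
    ∀ S ⊆ M, S.Nonempty → IsClosed S → Invt S → S = M

lemma mem_ballU' {A : Set X} {r : ℝ} {x : X} :
    x ∈ ballU A r ↔ ∃ a ∈ A, x ∈ Metric.closedBall a r := by
  simp [ballU]

lemma ballU_mem_of_par {p q : Ultrafilter X} {r : ℝ} (h : ∀ Q ∈ p, ballU Q r ∈ q)
    {Q : Set X} (hQ : Q ∈ q) : ballU Q r ∈ p := by
  by_contra hc
  have h1 : (ballU Q r)ᶜ ∈ p := Ultrafilter.compl_mem_iff_notMem.2 hc
  have h2 : ballU (ballU Q r)ᶜ r ∈ q := h _ h1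
  have hemp : ballU (ballU Q r)ᶜ r ∩ Q = ∅ := by
    ext x
    simp only [Set.mem_inter_iff, Set.mem_empty_iff_false, iff_false, not_and]
    intro hx hxQ
    rw [mem_ballU'] at hx
    obtain ⟨a, ha, hxa⟩ := hx
    exact ha (mem_ballU'.2 ⟨x, hxQ, by simpa [Metric.mem_closedBall, dist_comm] using hxa⟩)
  have : (∅ : Set X) ∈ q := hemp ▸ Filter.inter_mem h2 hQ
  exact Ultrafilter.empty_notMem this

lemma thin_delta_subsingleton {T : Set X} (hT : Thin T) (p : Ultrafilter X) :
    (Delta p T).Subsingleton := by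
  rintro q₁ ⟨hs₁, hT₁, r₁, hr₁, hp₁⟩ q₂ ⟨hs₂, hT₂, r₂, hr₂, hp₂⟩
  by_contra hne
  -- q₂ is parallel to q₁ with radius r₁ + r₂
  have hpar : ∀ Q ∈ q₁, ballU Q (r₁ + r₂) ∈ q₂ := by
    intro Q hQ
    have h1 : ballU Q r₁ ∈ p := ballU_mem_of_par hp₁ hQ
    have h2 : ballU (ballU Q r₁) r₂ ∈ q₂ := hp₂ _ h1
    refine Filter.mem_of_superset h2 ?_
    intro x hx
    rw [mem_ballU'] at hx
    obtain ⟨a, ha, hxa⟩ := hx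
    rw [mem_ballU'] at ha
    obtain ⟨b, hb, hab⟩ := ha
    refine mem_ballU'.2 ⟨b, hb, ?_⟩
    rw [Metric.mem_closedBall] at *
    calc dist x b ≤ dist x a + dist a b := dist_triangle _ _ _
      _ ≤ r₂ + r₁ := add_le_add hxa hab
      _ = r₁ + r₂ := add_comm _ _
  obtain ⟨V, hV, hV2⟩ := hT (r₁ + r₂) (by linarith)
  -- there is A ∈ q₁ with Aᶜ ∈ q₂
  obtain ⟨A, hA₁, hA₂⟩ : ∃ A, A ∈ q₁ ∧ Aᶜ ∈ q₂ := by
    by_contra hc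
    push_neg at hc
    have hle : (q₁ : Filter X) ≤ (q₂ : Filter X) := by
      intro A hA
      by_contra hA'
      exact (hc Aᶜ (Ultrafilter.compl_mem_iff_notMem.2 hA')) (by simpa using hA)
    exact hne (Ultrafilter.eq_of_le hle)
  have hVc : Vᶜ ∈ q₁ := by
    apply Ultrafilter.compl_mem_iff_notMem.2
    intro hmem
    exact hs₁ V hmem hV
  set Q : Set X := (T ∩ A) ∩ Vᶜ with hQdef
  have hQ : Q ∈ q₁ := Filter.inter_mem (Filter.inter_mem hT₁ hA₁) hVc
  have hb : ballU Q (r₁ + r₂) ∈ q₂ := hpar _ hQ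
  have hne2 : (ballU Q (r₁ + r₂) ∩ (T ∩ Aᶜ)).Nonempty :=
    Ultrafilter.nonempty_of_mem (Filter.inter_mem hb (Filter.inter_mem hT₂ hA₂))
  obtain ⟨x, hx1, hxT, hxA⟩ := hne2
  rw [mem_ballU'] at hx1
  obtain ⟨y, hy, hxy⟩ := hx1
  have hyTV : y ∈ T \ V := ⟨hy.1.1, hy.2⟩
  have := hV2 y hyTV
  have hxmem : x ∈ Metric.closedBall y (r₁ + r₂) ∩ T := ⟨hxy, hxT⟩
  rw [this] at hxmem
  rw [Set.mem_singleton_iff] at hxmem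
  subst hxmem
  exact hxA hy.1.2

lemma encard_iUnion_le_of_subsingleton {α : Type*} :
    ∀ (n : ℕ) (S : Fin n → Set α), (∀ i, (S i).Subsingleton) →
      (⋃ i, S i).encard ≤ n := by
  intro n
  induction n with
  | zero => intro S h; simp
  | succ n ih =>
    intro S h
    have : (⋃ i, S i) = S 0 ∪ ⋃ i : Fin n, S i.succ := by
      ext x
      simp only [Set.mem_iUnion, Set.mem_union, Fin.exists_fin_succ]
    rw [this]
    calc (S 0 ∪ ⋃ i : Fin n, S i.succ).encard
        ≤ (S 0).encard + (⋃ i : Fin n, S i.succ).encard := Set.encard_union_le _ _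
      _ ≤ 1 + n := add_le_add (Set.encard_le_one_iff.2 fun a b ha hb => h 0 ha hb) (ih _ fun i => h i.succ)
      _ = (n + 1 : ℕ) := by push_cast; ring

theorem stmt16 (hX : ¬ Bornology.IsBounded (Set.univ : Set X)) (Y : Set X) (n : ℕ)
    (f : Fin n → Set X) (hthin : ∀ i, Thin (f i))
    (hdisj : Pairwise (Function.onFun Disjoint f))
    (hY : Y = ⋃ i, f i) :
    ∀ p ∈ sharp X, (Delta p Y).encard ≤ n := by
  intro p _
  have hsub : Delta p Y ⊆ ⋃ i, Delta p (f i) := by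
    rintro q ⟨hs, hYq, hpar⟩
    rw [hY] at hYq
    have : (⋃ i ∈ (Set.univ : Set (Fin n)), f i) ∈ q := by simpa using hYq
    obtain ⟨i, -, hi⟩ := (Ultrafilter.finite_biUnion_mem_iff Set.finite_univ).1 this
    exact Set.mem_iUnion.2 ⟨i, hs, hi, hpar⟩
  calc (Delta p Y).encard ≤ (⋃ i, Delta p (f i)).encard := Set.encard_le_encard hsub
    _ ≤ n := encard_iUnion_le_of_subsingleton n _ fun i => thin_delta_subsingleton (hthin i) p
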